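/- Suppose ḡ is a symmetric (0,2)-tensor on a Lorentzian manifold (I, 𝔤) with -ḡ(X, X) ≤ 0 for every null vector X (𝔤(X,X) = 0). Then no open domain D ⊆ I with compact closure can satisfy the generalized null convexity criterion, provided D is crossed by at least one 𝔤-null geodesic λ : [0, ℓ] → I entering and exiting through ∂D (i.e., λ(0), λ(ℓ) ∈ ∂D and λ(s) ∈ D for 0 < s < ℓ). -/
import Mathlib


open Real Set

/-- Corollary "Failure of GNCC": if `-ḡ(X,X) ≤ 0` along null directions, then no
domain `D` (open, with compact closure, crossed by a null geodesic `λ` entering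
and exiting through `∂D`) can satisfy the GNCC.  The Lorentzian-geometric data is
encoded along the geodesic: `gbar s = ḡ(λ̇(s), λ̇(s))`, `pq s = 𝔭(λ̇(s), λ̇(s))`
(bounded below by `pmin > 0` by compactness), and the GNCC inequality restricted
along the null geodesic, using `𝔇²η(λ̇,λ̇)(s) = (η ∘ λ)''(s)`. -/
theorem stmt7 {I : Type*} [TopologicalSpace I]
    (D : Set I) (hDopen : IsOpen D) (hDcpt : IsCompact (closure D))
    (ℓ : ℝ) (hℓ : 0 < ℓ) (lam : ℝ → I)
    (hin : ∀ s ∈ Ioo (0:ℝ) ℓ, lam s ∈ D)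
    (h0 : lam 0 ∈ frontier D) (hl : lam ℓ ∈ frontier D)
    (gbar : ℝ → ℝ) (hgbar : ∀ s ∈ Icc (0:ℝ) ℓ, -gbar s ≤ 0)
    (η : I → ℝ) (c : ℝ) (hc : 0 < c)
    (pq : ℝ → ℝ) (pmin : ℝ) (hpmin : 0 < pmin)
    (hpq : ∀ s ∈ Icc (0:ℝ) ℓ, pmin ≤ pq s)
    (hηpos : ∀ x ∈ D, 0 < η x)
    (hη0 : ∀ x ∈ frontier D, η x = 0)
    (hθC : ContDiff ℝ 2 (fun s => η (lam s)))
    (hGNCC : ∀ s ∈ Icc (0:ℝ) ℓ,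
      deriv (deriv (fun t => η (lam t))) s - η (lam s) * gbar s
        > c * η (lam s) * pq s) :
    False := by
  set θ : ℝ → ℝ := fun s => η (lam s) with hθdef
  have hconv : StrictConvexOn ℝ (Icc 0 ℓ) θ := by
    apply strictConvexOn_of_deriv2_pos (convex_Icc 0 ℓ) hθC.continuous.continuousOn
    intro s hs
    rw [interior_Icc] at hs
    have hs' : s ∈ Icc (0:ℝ) ℓ := Ioo_subset_Icc_self hs
    have h1 := hGNCC s hs'
    have hθpos : 0 < η (lam s) := hηpos _ (hin s hs)
    have hg : 0 ≤ gbar s := by linarith [hgbar s hs']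
    have hp : 0 < pq s := lt_of_lt_of_le hpmin (hpq s hs')
    show 0 < deriv (deriv θ) s
    nlinarith [mul_nonneg hθpos.le hg, mul_pos (mul_pos hc hθpos) hp]
  have hmid : lam (ℓ/2) ∈ D := hin _ ⟨by linarith, by linarith⟩
  have hθm : 0 < θ (ℓ/2) := hηpos _ hmid
  have h2 := hconv.2 (left_mem_Icc.2 hℓ.le) (right_mem_Icc.2 hℓ.le) hℓ.ne
    (by norm_num : (0:ℝ) < 1/2) (by norm_num : (0:ℝ) < 1/2) (by norm_num)
  have e0 : θ 0 = 0 := hη0 _ h0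
  have el : θ ℓ = 0 := hη0 _ hl
  rw [e0, el] at h2
  simp only [smul_eq_mul] at h2
  have he : (1/2 : ℝ) * (0:ℝ) + (1/2:ℝ) * ℓ = ℓ/2 := by ring
  rw [he] at h2
  linarith
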